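/- On a uniform rectangular grid with mesh sizes h_x > 0 and h_y > 0, consider the checkerboard function u : ℤ×ℤ → ℝ defined by u_{i,j} = (−1)^{i+j}, with edge values given by the arithmetic mean of the two adjacent cell values (so u_σ = 0 on every interior edge). Then for every cell K_{i,j} and each of its four edges σ, the stabilized discrete gradient ∇_{K,σ} u := ∇_K u + R_{K,σ} u · n_{K,σ} is nonzero. For instance, for the right edge σ between K_{i,j} and K_{i+1,j} one has d_{K,σ} = h_x/2, x_σ − x_K = (h_x/2, 0), n_{K,σ} = (1,0), ∇_K u = (0,0), and R_{K,σ} u = (√2/(h_x/2))·(u_σ − u_{i,j} − ⟨∇_K u,(h_x/2,0)⟩) = −(2√2/h_x)(−1)^{i+j} ≠ 0, so ∇_{K,σ} u = −(2√2/h_x)(−1)^{i+j} (1,0) ≠ (0,0). -/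

import Mathlib

/-- Centered discrete cell gradient on a uniform rectangular grid. -/
noncomputable def gradK (hx hy : ℝ) (u : ℤ × ℤ → ℝ) (i j : ℤ) : ℝ × ℝ :=
  ((u (i + 1, j) - u (i - 1, j)) / (2 * hx),
   (u (i, j + 1) - u (i, j - 1)) / (2 * hy))

/-- Consistency residual `R_{K,σ} u = (√2 / d_{K,σ})(u_σ − u_K − ⟨∇_K u, x_σ − x_K⟩)`
of cell `K_{i,j}` at an edge `σ` with value `uσ`, distance `dKσ` from the cell
center to the edge, and `dx = x_σ − x_K`. -/
noncomputable def resid (hx hy : ℝ) (u : ℤ × ℤ → ℝ) (i j : ℤ)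
    (uσ dKσ : ℝ) (dx : ℝ × ℝ) : ℝ :=
  (Real.sqrt 2 / dKσ) *
    (uσ - u (i, j) - ((gradK hx hy u i j).1 * dx.1 + (gradK hx hy u i j).2 * dx.2))

/-- Stabilized discrete gradient `∇_{K,σ} u = ∇_K u + R_{K,σ} u · n_{K,σ}`. -/
noncomputable def stabGrad (hx hy : ℝ) (u : ℤ × ℤ → ℝ) (i j : ℤ)
    (uσ dKσ : ℝ) (dx n : ℝ × ℝ) : ℝ × ℝ :=
  gradK hx hy u i j + (resid hx hy u i j uσ dKσ dx) • n

/-- for the checkerboard function `u_{i,j} = (−1)^{i+j}` with edge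
values given by the arithmetic mean of the two adjacent cell values, the
stabilized discrete gradient is nonzero on every cell and every one of its four
edges; for the right edge it equals `−(2√2/h_x)(−1)^{i+j} (1,0)`. -/
theorem stmt4 (hx hy : ℝ) (hhx : 0 < hx) (hhy : 0 < hy)
    (u : ℤ × ℤ → ℝ) (hu : ∀ p : ℤ × ℤ, u p = (-1 : ℝ) ^ (p.1 + p.2)) :
    ∀ i j : ℤ,
      -- right edge
      stabGrad hx hy u i j ((u (i, j) + u (i + 1, j)) / 2) (hx / 2)
          (hx / 2, 0) (1, 0) ≠ (0, 0) ∧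
      -- left edge
      stabGrad hx hy u i j ((u (i, j) + u (i - 1, j)) / 2) (hx / 2)
          (-(hx / 2), 0) (-1, 0) ≠ (0, 0) ∧
      -- top edge
      stabGrad hx hy u i j ((u (i, j) + u (i, j + 1)) / 2) (hy / 2)
          (0, hy / 2) (0, 1) ≠ (0, 0) ∧
      -- bottom edge
      stabGrad hx hy u i j ((u (i, j) + u (i, j - 1)) / 2) (hy / 2)
          (0, -(hy / 2)) (0, -1) ≠ (0, 0) ∧
      -- explicit value on the right edge
      stabGrad hx hy u i j ((u (i, j) + u (i + 1, j)) / 2) (hx / 2)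
          (hx / 2, 0) (1, 0)
        = (-(2 * Real.sqrt 2 / hx) * (-1 : ℝ) ^ (i + j)) • ((1 : ℝ), (0 : ℝ)) := by
  intro i j
  have hne : ((-1 : ℝ)) ≠ 0 := by norm_num
  set e : ℝ := (-1 : ℝ) ^ (i + j) with he
  have he0 : e ≠ 0 := zpow_ne_zero _ hne
  have h00 : u (i, j) = e := hu (i, j)
  have flip : ∀ k : ℤ, (-1 : ℝ) ^ (k + 1) = -((-1 : ℝ) ^ k) := by
    intro k; rw [zpow_add₀ hne, zpow_one]; ring
  have h1 : u (i + 1, j) = -e := by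
    rw [hu]; show (-1 : ℝ) ^ (i + 1 + j) = -e
    rw [show i + 1 + j = (i + j) + 1 by ring, flip]
  have h2 : u (i - 1, j) = -e := by
    rw [hu]; show (-1 : ℝ) ^ (i - 1 + j) = -e
    have : (-1 : ℝ) ^ (i - 1 + j + 1) = -((-1 : ℝ) ^ (i - 1 + j)) := flip _
    rw [show i - 1 + j + 1 = i + j by ring] at this
    rw [← he] at this; linarith
  have h3 : u (i, j + 1) = -e := by
    rw [hu]; show (-1 : ℝ) ^ (i + (j + 1)) = -e
    rw [show i + (j + 1) = (i + j) + 1 by ring, flip]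
  have h4 : u (i, j - 1) = -e := by
    rw [hu]; show (-1 : ℝ) ^ (i + (j - 1)) = -e
    have : (-1 : ℝ) ^ (i + (j - 1) + 1) = -((-1 : ℝ) ^ (i + (j - 1))) := flip _
    rw [show i + (j - 1) + 1 = i + j by ring] at this
    rw [← he] at this; linarith
  have hg : gradK hx hy u i j = (0, 0) := by
    simp [gradK, h1, h2, h3, h4]
  have hR : ∀ (uσ dKσ : ℝ) (dx : ℝ × ℝ),
      resid hx hy u i j uσ dKσ dx = Real.sqrt 2 / dKσ * (uσ - e) := by
    intro uσ dKσ dx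
    simp [resid, hg, h00]
  have hS : ∀ (uσ dKσ : ℝ) (dx n : ℝ × ℝ),
      stabGrad hx hy u i j uσ dKσ dx n
        = (Real.sqrt 2 / dKσ * (uσ - e) * n.1, Real.sqrt 2 / dKσ * (uσ - e) * n.2) := by
    intro uσ dKσ dx n
    rw [stabGrad, hg, hR]
    simp [Prod.ext_iff, smul_eq_mul]
  have hs2 : Real.sqrt 2 ≠ 0 := by positivity
  have hx0 : hx ≠ 0 := ne_of_gt hhx
  have hy0 : hy ≠ 0 := ne_of_gt hhy
  have hxr : Real.sqrt 2 / (hx / 2) * (0 - e) ≠ 0 := by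
    apply mul_ne_zero (div_ne_zero hs2 (by positivity))
    simpa using he0
  have hyr : Real.sqrt 2 / (hy / 2) * (0 - e) ≠ 0 := by
    apply mul_ne_zero (div_ne_zero hs2 (by positivity))
    simpa using he0
  refine ⟨?_, ?_, ?_, ?_, ?_⟩
  · rw [hS]
    simp only [h1, h00, Prod.ext_iff]
    rw [show (e + -e) / 2 = 0 by ring]
    intro h
    exact hxr (by simpa using congrArg Prod.fst h)
  · rw [hS]
    simp only [h2, h00, Prod.ext_iff]
    rw [show (e + -e) / 2 = 0 by ring]
    intro h
    apply hxr
    have := congrArg Prod.fst h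
    simp at this
    simpa using this
  · rw [hS]
    simp only [h3, h00, Prod.ext_iff]
    rw [show (e + -e) / 2 = 0 by ring]
    intro h
    exact hyr (by simpa using congrArg Prod.snd h)
  · rw [hS]
    simp only [h4, h00, Prod.ext_iff]
    rw [show (e + -e) / 2 = 0 by ring]
    intro h
    apply hyr
    have := congrArg Prod.snd h
    simp at this
    simpa using this
  · rw [hS]
    simp only [h1, h00, Prod.ext_iff, smul_eq_mul, Prod.smul_mk]
    constructor
    · field_simp
      ring
    · simp
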